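/- The function T(x) := x²·sin x/(x − sin x) is positive and strictly decreasing on the open interval (0, π). -/

import Mathlib

open Real Set

private lemma deriv_nonneg_aux {f f' : ℝ → ℝ} (hf : ∀ t, HasDerivAt f (f' t) t)
    (h0 : f 0 = 0) (hd : ∀ t, 0 ≤ t → 0 ≤ f' t) {x : ℝ} (hx : 0 ≤ x) : 0 ≤ f x := by
  have hc : ContinuousOn f (Ici 0) := fun t _ => (hf t).continuousAt.continuousWithinAt
  have hdiff : DifferentiableOn ℝ f (interior (Ici 0)) :=
    fun t _ => (hf t).differentiableAt.differentiableWithinAt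
  have hm : MonotoneOn f (Ici 0) := by
    refine monotoneOn_of_deriv_nonneg (convex_Ici 0) hc hdiff ?_
    intro t ht
    rw [(hf t).deriv]
    exact hd t (le_of_lt (by simpa [interior_Ici] using ht))
  have := hm self_mem_Ici (mem_Ici.2 hx) hx
  linarith [this, h0]

private lemma sin_lb3 {x : ℝ} (hx : 0 ≤ x) : x - x ^ 3 / 6 ≤ Real.sin x := by
  have h := deriv_nonneg_aux (f := fun t => Real.sin t - t + t ^ 3 / 6)
    (f' := fun t => Real.cos t - 1 + t ^ 2 / 2) ?_ (by norm_num) ?_ hx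
  · linarith
  · intro t
    have h1 := Real.hasDerivAt_sin t
    have h2 : HasDerivAt (fun t : ℝ => t ^ 3 / 6) (t ^ 2 / 2) t := by
      have := (hasDerivAt_pow 3 t).div_const 6
      refine this.congr_deriv ?_; ring
    exact (h1.sub (hasDerivAt_id t)).add h2
  · intro t _
    have := Real.one_sub_sq_div_two_le_cos (x := t)
    linarith

private lemma cos_ub4 {x : ℝ} (hx : 0 ≤ x) : Real.cos x ≤ 1 - x ^ 2 / 2 + x ^ 4 / 24 := by
  have h := deriv_nonneg_aux (f := fun t => 1 - t ^ 2 / 2 + t ^ 4 / 24 - Real.cos t)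
    (f' := fun t => -t + t ^ 3 / 6 + Real.sin t) ?_ (by norm_num) ?_ hx
  · linarith
  · intro t
    have h1 : HasDerivAt (fun t : ℝ => 1 - t ^ 2 / 2) (-t) t := by
      have := (hasDerivAt_pow 2 t).div_const 2
      have h2 := (hasDerivAt_const t (1 : ℝ)).sub this
      refine h2.congr_deriv ?_; push_cast; ring
    have h2 : HasDerivAt (fun t : ℝ => t ^ 4 / 24) (t ^ 3 / 6) t := by
      have := (hasDerivAt_pow 4 t).div_const 24
      refine this.congr_deriv ?_; ring
    have := (h1.add h2).sub (Real.hasDerivAt_cos t)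
    refine this.congr_deriv ?_; ring
  · intro t ht
    have := sin_lb3 ht
    linarith

private lemma sin_ub5 {x : ℝ} (hx : 0 ≤ x) : Real.sin x ≤ x - x ^ 3 / 6 + x ^ 5 / 120 := by
  have h := deriv_nonneg_aux (f := fun t => t - t ^ 3 / 6 + t ^ 5 / 120 - Real.sin t)
    (f' := fun t => 1 - t ^ 2 / 2 + t ^ 4 / 24 - Real.cos t) ?_ (by norm_num) ?_ hx
  · linarith
  · intro t
    have h1 : HasDerivAt (fun t : ℝ => t - t ^ 3 / 6) (1 - t ^ 2 / 2) t := by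
      have := (hasDerivAt_id t).sub ((hasDerivAt_pow 3 t).div_const 6)
      refine this.congr_deriv ?_; push_cast; ring
    have h2 : HasDerivAt (fun t : ℝ => t ^ 5 / 120) (t ^ 4 / 24) t := by
      have := (hasDerivAt_pow 5 t).div_const 120
      refine this.congr_deriv ?_; ring
    exact (h1.add h2).sub (Real.hasDerivAt_sin t)
  · intro t ht
    have := cos_ub4 ht
    linarith

private lemma cos_lb6 {x : ℝ} (hx : 0 ≤ x) :
    1 - x ^ 2 / 2 + x ^ 4 / 24 - x ^ 6 / 720 ≤ Real.cos x := by
  have h := deriv_nonneg_aux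
    (f := fun t => Real.cos t - 1 + t ^ 2 / 2 - t ^ 4 / 24 + t ^ 6 / 720)
    (f' := fun t => -Real.sin t + t - t ^ 3 / 6 + t ^ 5 / 120) ?_ (by norm_num) ?_ hx
  · linarith
  · intro t
    have h1 : HasDerivAt (fun t : ℝ => Real.cos t - 1 + t ^ 2 / 2) (-Real.sin t + t) t := by
      have := ((Real.hasDerivAt_cos t).sub (hasDerivAt_const t (1 : ℝ))).add
        ((hasDerivAt_pow 2 t).div_const 2)
      refine this.congr_deriv ?_; push_cast; ring
    have h2 : HasDerivAt (fun t : ℝ => t ^ 4 / 24) (t ^ 3 / 6) t := by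
      have := (hasDerivAt_pow 4 t).div_const 24
      refine this.congr_deriv ?_; ring
    have h3 : HasDerivAt (fun t : ℝ => t ^ 6 / 720) (t ^ 5 / 120) t := by
      have := (hasDerivAt_pow 6 t).div_const 720
      refine this.congr_deriv ?_; ring
    exact (h1.sub h2).add h3
  · intro t ht
    have := sin_ub5 ht
    linarith

private lemma sin_lb7 {x : ℝ} (hx : 0 ≤ x) :
    x - x ^ 3 / 6 + x ^ 5 / 120 - x ^ 7 / 5040 ≤ Real.sin x := by
  have h := deriv_nonneg_aux
    (f := fun t => Real.sin t - t + t ^ 3 / 6 - t ^ 5 / 120 + t ^ 7 / 5040)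
    (f' := fun t => Real.cos t - 1 + t ^ 2 / 2 - t ^ 4 / 24 + t ^ 6 / 720) ?_ (by norm_num) ?_ hx
  · linarith
  · intro t
    have h1 : HasDerivAt (fun t : ℝ => Real.sin t - t + t ^ 3 / 6) (Real.cos t - 1 + t ^ 2 / 2) t := by
      have := ((Real.hasDerivAt_sin t).sub (hasDerivAt_id t)).add
        ((hasDerivAt_pow 3 t).div_const 6)
      refine this.congr_deriv ?_; push_cast; ring
    have h2 : HasDerivAt (fun t : ℝ => t ^ 5 / 120) (t ^ 4 / 24) t := by
      have := (hasDerivAt_pow 5 t).div_const 120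
      refine this.congr_deriv ?_; ring
    have h3 : HasDerivAt (fun t : ℝ => t ^ 7 / 5040) (t ^ 6 / 720) t := by
      have := (hasDerivAt_pow 7 t).div_const 5040
      refine this.congr_deriv ?_; ring
    exact (h1.sub h2).add h3
  · intro t ht
    have := cos_lb6 ht
    linarith

private lemma cos_ub8 {x : ℝ} (hx : 0 ≤ x) :
    Real.cos x ≤ 1 - x ^ 2 / 2 + x ^ 4 / 24 - x ^ 6 / 720 + x ^ 8 / 40320 := by
  have h := deriv_nonneg_aux
    (f := fun t => 1 - t ^ 2 / 2 + t ^ 4 / 24 - t ^ 6 / 720 + t ^ 8 / 40320 - Real.cos t)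
    (f' := fun t => -t + t ^ 3 / 6 - t ^ 5 / 120 + t ^ 7 / 5040 + Real.sin t) ?_ (by norm_num) ?_ hx
  · linarith
  · intro t
    have h1 : HasDerivAt (fun t : ℝ => 1 - t ^ 2 / 2 + t ^ 4 / 24) (-t + t ^ 3 / 6) t := by
      have := ((hasDerivAt_const t (1 : ℝ)).sub ((hasDerivAt_pow 2 t).div_const 2)).add
        ((hasDerivAt_pow 4 t).div_const 24)
      refine this.congr_deriv ?_; push_cast; ring
    have h2 : HasDerivAt (fun t : ℝ => t ^ 6 / 720) (t ^ 5 / 120) t := by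
      have := (hasDerivAt_pow 6 t).div_const 720
      refine this.congr_deriv ?_; ring
    have h3 : HasDerivAt (fun t : ℝ => t ^ 8 / 40320) (t ^ 7 / 5040) t := by
      have := (hasDerivAt_pow 8 t).div_const 40320
      refine this.congr_deriv ?_; ring
    have := ((h1.sub h2).add h3).sub (Real.hasDerivAt_cos t)
    refine this.congr_deriv ?_; ring
  · intro t ht
    have := sin_lb7 ht
    linarith

set_option maxHeartbeats 1600000 in
private lemma phi_pos {x : ℝ} (hx : 0 < x) (hxπ : x < π) :
    0 < 2 * Real.sin x ^ 2 - x * Real.sin x - x ^ 2 * Real.cos x := by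
  have hx0 : (0 : ℝ) ≤ x := hx.le
  have hs7 := sin_lb7 hx0
  have hs5 := sin_ub5 hx0
  have hc8 := cos_ub8 hx0
  have hxU : x * Real.sin x ≤ x * (x - x ^ 3 / 6 + x ^ 5 / 120) :=
    mul_le_mul_of_nonneg_left hs5 hx0
  have hxC : x ^ 2 * Real.cos x ≤
      x ^ 2 * (1 - x ^ 2 / 2 + x ^ 4 / 24 - x ^ 6 / 720 + x ^ 8 / 40320) :=
    mul_le_mul_of_nonneg_left hc8 (sq_nonneg x)
  rcases le_or_gt x 3 with h3 | h3
  · -- small case: use squared lower bound for sin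
    have hy : x ^ 2 ≤ 9 := by nlinarith
    have hL : 0 ≤ x - x ^ 3 / 6 + x ^ 5 / 120 - x ^ 7 / 5040 := by
      nlinarith [pow_pos hx 3, pow_pos hx 5, pow_pos hx 7, sq_nonneg (x ^ 2 - 9),
        sq_nonneg (x ^ 2 - 3), mul_pos hx hx]
    have hsq : (x - x ^ 3 / 6 + x ^ 5 / 120 - x ^ 7 / 5040) ^ 2 ≤ Real.sin x ^ 2 := by
      nlinarith [hL, hs7]
    have hquart : 0 < 493920 - 63000 * x ^ 2 + 3129 * x ^ 4 - 84 * x ^ 6 + x ^ 8 := by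
      nlinarith [sq_nonneg (x ^ 2 - 9), sq_nonneg (x ^ 2), mul_nonneg (sq_nonneg x) (sub_nonneg.2 hy),
        mul_nonneg (mul_nonneg (sq_nonneg x) (sq_nonneg x)) (sub_nonneg.2 hy)]
    have hx6 : 0 < x ^ 6 := pow_pos hx 6
    have key : 0 < 2 * (x - x ^ 3 / 6 + x ^ 5 / 120 - x ^ 7 / 5040) ^ 2
        - x * (x - x ^ 3 / 6 + x ^ 5 / 120)
        - x ^ 2 * (1 - x ^ 2 / 2 + x ^ 4 / 24 - x ^ 6 / 720 + x ^ 8 / 40320) := by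
      have h := mul_pos hx6 hquart
      have heq : 2 * (x - x ^ 3 / 6 + x ^ 5 / 120 - x ^ 7 / 5040) ^ 2
          - x * (x - x ^ 3 / 6 + x ^ 5 / 120)
          - x ^ 2 * (1 - x ^ 2 / 2 + x ^ 4 / 24 - x ^ 6 / 720 + x ^ 8 / 40320)
          = x ^ 6 * (493920 - 63000 * x ^ 2 + 3129 * x ^ 4 - 84 * x ^ 6 + x ^ 8) / 12700800 := by
        ring
      rw [heq]
      linarith [h]
    linarith [hsq, hxU, hxC, key]
  · -- large case: 3 ≤ x < π < 3.15
    have hπ : x < 3.15 := lt_of_lt_of_le hxπ (le_of_lt Real.pi_lt_d2)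
    have hy1 : (9 : ℝ) ≤ x ^ 2 := by nlinarith
    have hy2 : x ^ 2 ≤ 9.9225 := by nlinarith
    have ha : 0 ≤ x ^ 2 - 9 := by linarith
    have hb : 0 ≤ 9.9225 - x ^ 2 := by linarith
    have key2 : 0 < -80640 + 26880 * x ^ 2 - 2016 * x ^ 4 + 56 * x ^ 6 - x ^ 8 := by
      nlinarith [mul_nonneg ha hb, mul_nonneg (mul_nonneg ha hb) ha,
        mul_nonneg (mul_nonneg ha hb) hb, sq_nonneg (x ^ 2 - 9), mul_nonneg ha ha]
    have key : 0 < - (x * (x - x ^ 3 / 6 + x ^ 5 / 120))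
        - x ^ 2 * (1 - x ^ 2 / 2 + x ^ 4 / 24 - x ^ 6 / 720 + x ^ 8 / 40320) := by
      have h := mul_pos (mul_pos hx hx) key2
      have heq : - (x * (x - x ^ 3 / 6 + x ^ 5 / 120))
          - x ^ 2 * (1 - x ^ 2 / 2 + x ^ 4 / 24 - x ^ 6 / 720 + x ^ 8 / 40320)
          = x * x * (-80640 + 26880 * x ^ 2 - 2016 * x ^ 4 + 56 * x ^ 6 - x ^ 8) / 40320 := by
        ring
      rw [heq]
      linarith [h]
    linarith [sq_nonneg (Real.sin x), hxU, hxC, key]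

private lemma T_hasDerivAt {x : ℝ} (hx : 0 < x) (hxπ : x < π) :
    HasDerivAt (fun x : ℝ => x ^ 2 * Real.sin x / (x - Real.sin x))
      (-(x * (2 * Real.sin x ^ 2 - x * Real.sin x - x ^ 2 * Real.cos x)) /
        (x - Real.sin x) ^ 2) x := by
  have hden : x - Real.sin x ≠ 0 := by
    have := Real.sin_lt hx
    linarith
  have hnum : HasDerivAt (fun x : ℝ => x ^ 2 * Real.sin x)
      (2 * x * Real.sin x + x ^ 2 * Real.cos x) x := by
    have := (hasDerivAt_pow 2 x).mul (Real.hasDerivAt_sin x)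
    refine this.congr_deriv ?_; push_cast; ring
  have hdenD : HasDerivAt (fun x : ℝ => x - Real.sin x) (1 - Real.cos x) x :=
    (hasDerivAt_id x).sub (Real.hasDerivAt_sin x)
  have := hnum.div hdenD hden
  refine this.congr_deriv ?_
  field_simp
  ring

theorem T_pos_strictAntiOn :
    (∀ x ∈ Ioo 0 π, 0 < x ^ 2 * sin x / (x - sin x)) ∧
    StrictAntiOn (fun x : ℝ => x ^ 2 * sin x / (x - sin x)) (Ioo 0 π) := by
  constructor
  · intro x hx
    exact div_pos (mul_pos (pow_pos hx.1 2) (Real.sin_pos_of_pos_of_lt_pi hx.1 hx.2))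
      (sub_pos.2 (Real.sin_lt hx.1))
  · apply strictAntiOn_of_deriv_neg (convex_Ioo 0 π)
    · apply ContinuousOn.div
      · exact (continuous_pow 2).continuousOn.mul Real.continuous_sin.continuousOn
      · exact continuousOn_id.sub Real.continuous_sin.continuousOn
      · intro x hx
        have h := Real.sin_lt hx.1
        show x - Real.sin x ≠ 0
        exact sub_ne_zero.2 (ne_of_gt h)
    · intro x hx
      rw [interior_Ioo] at hx
      rw [(T_hasDerivAt hx.1 hx.2).deriv]
      apply div_neg_of_neg_of_pos
      · have := phi_pos hx.1 hx.2
        have := mul_pos hx.1 this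
        linarith
      · have hden : 0 < x - Real.sin x := sub_pos.2 (Real.sin_lt hx.1)
        positivity
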